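/- With p and Y as in the context, the second moment of Y under p is at most four times the squared distance between the two unit vectors: ∑_{s ∈ ι} p(s) · Y(s)² ≤ 4‖φ₁ − φ₀‖². -/

import Mathlib

/-- With `p s = |⟨e_s, φ₀⟩|²` and
`Y s = 2·Re[(⟨e_s, φ₁⟩ − ⟨e_s, φ₀⟩)/⟨e_s, φ₀⟩]` (where `⟨e_s, φ⟩ = φ s` is the
coefficient of `φ` in the standard orthonormal basis of `ℂ^ι`), the second moment
of `Y` under `p` is at most `4‖φ₁ − φ₀‖²`. -/
theorem stmt4 {ι : Type*} [Fintype ι] [Nonempty ι]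
    (φ₀ φ₁ : EuclideanSpace ℂ ι) (h₀ : ‖φ₀‖ = 1) (h₁ : ‖φ₁‖ = 1)
    (hne : ∀ s, φ₀ s ≠ 0)
    (p Y : ι → ℝ)
    (hp : ∀ s, p s = ‖φ₀ s‖ ^ 2)
    (hY : ∀ s, Y s = 2 * ((φ₁ s - φ₀ s) / φ₀ s).re) :
    ∑ s, p s * Y s ^ 2 ≤ 4 * ‖φ₁ - φ₀‖ ^ 2 := by
  have hnorm : ‖φ₁ - φ₀‖ ^ 2 = ∑ s, ‖φ₁ s - φ₀ s‖ ^ 2 := by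
    rw [EuclideanSpace.norm_eq, Real.sq_sqrt (by positivity)]
    simp [PiLp.sub_apply]
  rw [hnorm, Finset.mul_sum]
  apply Finset.sum_le_sum
  intro s _
  rw [hp, hY]
  set z : ℂ := (φ₁ s - φ₀ s) / φ₀ s with hz
  have hre : z.re ^ 2 ≤ ‖z‖ ^ 2 := by
    have := Complex.abs_re_le_norm z
    have h2 : |z.re| ^ 2 = z.re ^ 2 := sq_abs _
    calc z.re ^ 2 = |z.re| ^ 2 := h2.symm
      _ ≤ ‖z‖ ^ 2 := by
          apply pow_le_pow_left₀ (abs_nonneg _) this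
      _ = ‖z‖ ^ 2 := rfl
  have hnz : ‖z‖ ^ 2 = ‖φ₁ s - φ₀ s‖ ^ 2 / ‖φ₀ s‖ ^ 2 := by
    rw [hz, norm_div, div_pow]
  have hb : ‖φ₀ s‖ ≠ 0 := norm_ne_zero_iff.mpr (hne s)
  have h0 : (0:ℝ) < ‖φ₀ s‖ ^ 2 := pow_pos (norm_pos_iff.mpr (hne s)) 2
  calc ‖φ₀ s‖ ^ 2 * (2 * z.re) ^ 2 = ‖φ₀ s‖ ^ 2 * (4 * z.re ^ 2) := by ring
    _ ≤ ‖φ₀ s‖ ^ 2 * (4 * ‖z‖ ^ 2) := by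
        apply mul_le_mul_of_nonneg_left (by linarith) (le_of_lt h0)
    _ = 4 * ‖φ₁ s - φ₀ s‖ ^ 2 := by
        rw [hnz, mul_comm, mul_assoc, div_mul_cancel₀ _ (ne_of_gt h0)]
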